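/- Let θ ≥ 0 and suppose π̂, r : V → ℝ satisfy, for every t ∈ V, the invariant π_s(t) = π̂(t) + Σ_{u∈V} r(u)·π_u(t), with 0 ≤ r(u) ≤ θ·d(u) for every u ∈ V. Then Σ_{t∈V} |π_s(t) − π̂(t)| ≤ θ·‖A‖₁. In particular, taking θ = ε/‖A‖₁ for ε > 0, the reserve vector π̂ approximates π_s within ℓ1-error ε. -/

import Mathlib

open Finset

/-- Weighted degree of a node. -/
noncomputable def deg {V : Type*} [Fintype V] (A : V → V → ℝ) (u : V) : ℝ := ∑ v, A u v

/-- Transition matrix `P t v = A t v / d v` (column-stochastic). -/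
noncomputable def transP {V : Type*} [Fintype V] (A : V → V → ℝ) : Matrix V V ℝ :=
  Matrix.of fun t v => A t v / deg A v

/-- Single-source personalized PageRank: `π_x = Σ_{ℓ≥0} α(1-α)^ℓ P^ℓ e_x`. -/
noncomputable def ppr {V : Type*} [Fintype V] [DecidableEq V]
    (A : V → V → ℝ) (α : ℝ) (x t : V) : ℝ :=
  ∑' ℓ : ℕ, α * (1 - α) ^ ℓ * ((transP A ^ ℓ).mulVec (Pi.single x 1)) t

set_option linter.unusedSectionVars false

section Aux
variable {V : Type*} [Fintype V] [DecidableEq V]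

lemma transP_nonneg (A : V → V → ℝ) (hnonneg : ∀ u v, 0 ≤ A u v)
    (hdeg : ∀ u, 0 < deg A u) (t v : V) : 0 ≤ transP A t v :=
  div_nonneg (hnonneg t v) (hdeg v).le

lemma transP_col_sum (A : V → V → ℝ) (hsymm : ∀ u v, A u v = A v u)
    (hdeg : ∀ u, 0 < deg A u) (v : V) : ∑ t, transP A t v = 1 := by
  simp only [transP, Matrix.of_apply]
  rw [← Finset.sum_div]
  have : ∑ t, A t v = deg A v := by
    rw [deg]; exact Finset.sum_congr rfl fun t _ => hsymm t v
  rw [this, div_self (hdeg v).ne']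

lemma pow_nonneg' (A : V → V → ℝ) (hnonneg : ∀ u v, 0 ≤ A u v)
    (hdeg : ∀ u, 0 < deg A u) (ℓ : ℕ) (t v : V) : 0 ≤ (transP A ^ ℓ) t v := by
  induction ℓ generalizing t v with
  | zero => simp [Matrix.one_apply]; split <;> norm_num
  | succ n ih =>
    rw [pow_succ', Matrix.mul_apply]
    exact Finset.sum_nonneg fun k _ => mul_nonneg (transP_nonneg A hnonneg hdeg t k) (ih k v)

lemma pow_col_sum (A : V → V → ℝ) (hsymm : ∀ u v, A u v = A v u)
    (hdeg : ∀ u, 0 < deg A u) (ℓ : ℕ) (v : V) : ∑ t, (transP A ^ ℓ) t v = 1 := by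
  induction ℓ generalizing v with
  | zero => simp [Matrix.one_apply]
  | succ n ih =>
    simp only [pow_succ', Matrix.mul_apply]
    rw [Finset.sum_comm]
    calc ∑ k, ∑ t, transP A t k * (transP A ^ n) k v
        = ∑ k, (∑ t, transP A t k) * (transP A ^ n) k v := by
          simp [Finset.sum_mul]
      _ = ∑ k, (transP A ^ n) k v := by
          simp [transP_col_sum A hsymm hdeg]
      _ = 1 := ih v

lemma mulVec_single (A : V → V → ℝ) (ℓ : ℕ) (x t : V) :
    ((transP A ^ ℓ).mulVec (Pi.single x 1)) t = (transP A ^ ℓ) t x := by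
  rw [Matrix.mulVec_single]; simp

lemma ppr_summable (A : V → V → ℝ) (hnonneg : ∀ u v, 0 ≤ A u v)
    (hsymm : ∀ u v, A u v = A v u) (hdeg : ∀ u, 0 < deg A u)
    {α : ℝ} (hα : α ∈ Set.Ioo (0:ℝ) 1) (x t : V) :
    Summable fun ℓ : ℕ => α * (1 - α) ^ ℓ * ((transP A ^ ℓ).mulVec (Pi.single x 1)) t := by
  obtain ⟨hα0, hα1⟩ := hα
  have h1 : (0:ℝ) ≤ 1 - α := by linarith
  have hgeo : Summable fun ℓ : ℕ => α * (1 - α) ^ ℓ :=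
    (summable_geometric_of_lt_one h1 (by linarith)).mul_left α
  refine Summable.of_nonneg_of_le (f := fun ℓ : ℕ => α * (1 - α) ^ ℓ) ?_ ?_ hgeo
  · intro ℓ
    rw [mulVec_single]
    exact mul_nonneg (mul_nonneg hα0.le (pow_nonneg h1 _)) (pow_nonneg' A hnonneg hdeg ℓ t x)
  · intro ℓ
    rw [mulVec_single]
    have hle : (transP A ^ ℓ) t x ≤ 1 := by
      calc (transP A ^ ℓ) t x ≤ ∑ u, (transP A ^ ℓ) u x :=
            Finset.single_le_sum (fun u _ => pow_nonneg' A hnonneg hdeg ℓ u x) (mem_univ t)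
        _ = 1 := pow_col_sum A hsymm hdeg ℓ x
    have hpos : (0:ℝ) ≤ α * (1 - α) ^ ℓ := mul_nonneg hα0.le (pow_nonneg h1 _)
    show α * (1 - α) ^ ℓ * (transP A ^ ℓ) t x ≤ α * (1 - α) ^ ℓ
    calc α * (1 - α) ^ ℓ * (transP A ^ ℓ) t x ≤ α * (1 - α) ^ ℓ * 1 :=
          mul_le_mul_of_nonneg_left hle hpos
      _ = α * (1 - α) ^ ℓ := mul_one _

lemma ppr_nonneg (A : V → V → ℝ) (hnonneg : ∀ u v, 0 ≤ A u v)
    (hdeg : ∀ u, 0 < deg A u)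
    {α : ℝ} (hα : α ∈ Set.Ioo (0:ℝ) 1) (x t : V) : 0 ≤ ppr A α x t := by
  apply tsum_nonneg
  intro ℓ
  rw [mulVec_single]
  exact mul_nonneg (mul_nonneg hα.1.le (pow_nonneg (by linarith [hα.2]) _))
    (pow_nonneg' A hnonneg hdeg ℓ t x)

lemma ppr_sum_one (A : V → V → ℝ) (hnonneg : ∀ u v, 0 ≤ A u v)
    (hsymm : ∀ u v, A u v = A v u) (hdeg : ∀ u, 0 < deg A u)
    {α : ℝ} (hα : α ∈ Set.Ioo (0:ℝ) 1) (x : V) : ∑ t, ppr A α x t = 1 := by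
  obtain ⟨hα0, hα1⟩ := hα
  unfold ppr
  rw [← Summable.tsum_finsetSum (fun t _ => ppr_summable A hnonneg hsymm hdeg ⟨hα0, hα1⟩ x t)]
  have : ∀ ℓ : ℕ, (∑ t, α * (1 - α) ^ ℓ * ((transP A ^ ℓ).mulVec (Pi.single x 1)) t)
      = α * (1 - α) ^ ℓ := by
    intro ℓ
    simp only [mulVec_single]
    rw [← Finset.mul_sum, pow_col_sum A hsymm hdeg, mul_one]
  rw [tsum_congr this, tsum_mul_left, tsum_geometric_of_lt_one (by linarith) (by linarith)]
    <;> field_simp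
  rw [sub_sub_cancel, div_self hα0.ne']

end Aux

/-- **ℓ1-error of LocalPush (Fact 2.2)**: if the LocalPush invariant holds and every
residue satisfies `0 ≤ r(u) ≤ θ·d(u)`, then the reserve vector `π̂` approximates `π_s`
within ℓ1-error `θ·‖A‖₁`; in particular, for `θ = ε/‖A‖₁` the ℓ1-error is at most `ε`. -/
theorem localpush_l1_error
    {V : Type*} [Fintype V] [DecidableEq V] [Nonempty V]
    (A : V → V → ℝ)
    (hsymm : ∀ u v : V, A u v = A v u)
    (hnonneg : ∀ u v : V, 0 ≤ A u v)
    (hdeg : ∀ u : V, 0 < deg A u)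
    (α : ℝ) (hα : α ∈ Set.Ioo (0 : ℝ) 1)
    (s : V)
    (normA : ℝ) (hnormA : normA = ∑ u, ∑ v, A u v)
    (θ : ℝ) (hθ : 0 ≤ θ)
    (piHat r : V → ℝ)
    (hinv : ∀ t : V, ppr A α s t = piHat t + ∑ u, r u * ppr A α u t)
    (hr : ∀ u : V, 0 ≤ r u ∧ r u ≤ θ * deg A u) :
    (∑ t, |ppr A α s t - piHat t| ≤ θ * normA) ∧
    (∀ ε : ℝ, 0 < ε → θ = ε / normA →
      ∑ t, |ppr A α s t - piHat t| ≤ ε) := by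
  have hnormA_deg : normA = ∑ u, deg A u := by
    rw [hnormA]; rfl
  have hnormA_pos : 0 < normA := by
    rw [hnormA_deg]
    exact Finset.sum_pos (fun u _ => hdeg u) univ_nonempty
  have key : ∑ t, |ppr A α s t - piHat t| = ∑ u, r u := by
    have habs : ∀ t, |ppr A α s t - piHat t| = ∑ u, r u * ppr A α u t := by
      intro t
      rw [hinv t]
      rw [add_sub_cancel_left]
      exact abs_of_nonneg (Finset.sum_nonneg fun u _ =>
        mul_nonneg (hr u).1 (ppr_nonneg A hnonneg hdeg hα u t))
    calc ∑ t, |ppr A α s t - piHat t| = ∑ t, ∑ u, r u * ppr A α u t := by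
          exact Finset.sum_congr rfl fun t _ => habs t
      _ = ∑ u, ∑ t, r u * ppr A α u t := Finset.sum_comm
      _ = ∑ u, r u * ∑ t, ppr A α u t := by
          simp [Finset.mul_sum]
      _ = ∑ u, r u := by
          simp [ppr_sum_one A hnonneg hsymm hdeg hα]
  have hmain : ∑ t, |ppr A α s t - piHat t| ≤ θ * normA := by
    rw [key, hnormA_deg, Finset.mul_sum]
    exact Finset.sum_le_sum fun u _ => (hr u).2
  refine ⟨hmain, fun ε hε hθε => ?_⟩
  calc ∑ t, |ppr A α s t - piHat t| ≤ θ * normA := hmain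
    _ = ε := by rw [hθε]; field_simp
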